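/- There exists a continuous nondecreasing function $\Psi : [0,1] \to [0,1]$ with $\Psi(0) = 0$, $\Psi(1) = 1$, such that $\Psi'(t) = 0$ for all $t \in (0,1)$ outside a set of logarithmic capacity zero. -/

import Mathlib

open Filter

/-- `V_n(E)` for `E ⊆ ℝ`: supremum of products of pairwise distances over
`n`-point collections in `E`. -/
noncomputable def VnR (E : Set ℝ) (n : ℕ) : ℝ :=
  sSup {v : ℝ | ∃ z : Fin n → ℝ, (∀ i, z i ∈ E) ∧
    v = ∏ p ∈ Finset.univ.filter (fun p : Fin n × Fin n => p.1 < p.2), |z p.1 - z p.2|}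

/-- The logarithmic capacity (transfinite diameter) of `E ⊆ ℝ`: the limit
(= infimum, the sequence being nonincreasing) of `V_n^{2/(n(n-1))}`. -/
noncomputable def capR (E : Set ℝ) : ℝ :=
  ⨅ n : ℕ, VnR E (n + 2) ^ ((2 : ℝ) / (((n : ℝ) + 2) * ((n : ℝ) + 1)))

namespace CantorCap

open Set Finset

/-- interval lengths -/
noncomputable def l (k : ℕ) : ℝ := (2:ℝ)⁻¹ ^ (8 ^ k)

/-- gap steps -/
noncomputable def g (k : ℕ) : ℝ := l k - l (k + 1)

lemma l_pos (k : ℕ) : 0 < l k := by unfold l; positivity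

lemma l_le_one (k : ℕ) : l k ≤ 1 := by
  unfold l
  exact pow_le_one₀ (by norm_num) (by norm_num)

lemma two_l_succ_lt (k : ℕ) : 2 * l (k + 1) < l k := by
  unfold l
  have h1 : (2:ℝ) * (2:ℝ)⁻¹ ^ (8 ^ (k+1)) = (2:ℝ)⁻¹ ^ (8 ^ (k+1) - 1) := by
    have h8 : 1 ≤ 8 ^ (k+1) := Nat.one_le_pow _ _ (by norm_num)
    rw [← pow_sub_one_mul (by omega : 8 ^ (k+1) ≠ 0) ((2:ℝ)⁻¹)]
    ring
  rw [h1]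
  apply pow_lt_pow_right_of_lt_one₀ (by norm_num) (by norm_num)
  have : 8 ^ k < 8 ^ (k + 1) := Nat.pow_lt_pow_succ (by norm_num)
  omega

lemma g_pos (k : ℕ) : 0 < g k := by
  have h := two_l_succ_lt k
  have h2 := l_pos (k + 1)
  unfold g; linarith

lemma g_nonneg (k : ℕ) : 0 ≤ g k := (g_pos k).le

lemma l_tail_tendsto (k : ℕ) : Tendsto (fun n => l (k + n)) atTop (nhds 0) := by
  have hle : ∀ n : ℕ, l (k + n) ≤ (2:ℝ)⁻¹ ^ n := by
    intro n
    unfold l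
    apply pow_le_pow_of_le_one (by norm_num) (by norm_num)
    calc n ≤ 8 ^ n := Nat.le_of_lt (Nat.lt_pow_self (by norm_num : 1 < 8))
    _ ≤ 8 ^ (k + n) := Nat.pow_le_pow_right (by norm_num) (by omega)
  have h0 : Tendsto (fun n : ℕ => (2:ℝ)⁻¹ ^ n) atTop (nhds 0) :=
    tendsto_pow_atTop_nhds_zero_of_lt_one (by norm_num) (by norm_num)
  exact squeeze_zero (fun n => (l_pos _).le) hle h0

lemma hasSum_g_tail (k : ℕ) : HasSum (fun j => g (j + k)) (l k) := by
  have hpart : ∀ n : ℕ, ∑ j ∈ Finset.range n, g (j + k) = l k - l (k + n) := by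
    intro n
    have : ∀ j, g (j + k) = l (k + j) - l (k + (j+1)) := by
      intro j
      unfold g
      congr 2 <;> omega
    simp only [this]
    exact Finset.sum_range_sub' (fun j => l (k + j)) n
  have hnn : ∀ j, 0 ≤ g (j + k) := fun j => g_nonneg _
  rw [hasSum_iff_tendsto_nat_of_nonneg hnn]
  simp only [hpart]
  have := (l_tail_tendsto k).const_sub (l k)
  simpa using this

lemma summable_g : Summable g := by
  have := (hasSum_g_tail 0).summable
  simpa using this

/-- the embedding of binary sequences -/
noncomputable def phiC (a : ℕ → Bool) : ℝ := ∑' k, if a k then g k else 0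

/-- the value map (binary expansion) -/
noncomputable def yv (a : ℕ → Bool) : ℝ := ∑' k, if a k then (2:ℝ)⁻¹ ^ (k + 1) else 0

lemma phi_term_nonneg (a : ℕ → Bool) (k : ℕ) : 0 ≤ if a k then g k else 0 := by
  split
  · exact g_nonneg k
  · exact le_rfl

lemma phi_term_le (a : ℕ → Bool) (k : ℕ) : (if a k then g k else 0) ≤ g k := by
  split
  · exact le_rfl
  · exact g_nonneg k

lemma summable_phi (a : ℕ → Bool) : Summable (fun k => if a k then g k else 0) :=
  Summable.of_nonneg_of_le (phi_term_nonneg a) (phi_term_le a) summable_g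

lemma yv_term_nonneg (a : ℕ → Bool) (k : ℕ) : 0 ≤ if a k then (2:ℝ)⁻¹ ^ (k+1) else 0 := by
  split
  · positivity
  · exact le_rfl

lemma yv_term_le (a : ℕ → Bool) (k : ℕ) :
    (if a k then (2:ℝ)⁻¹ ^ (k+1) else 0) ≤ (2:ℝ)⁻¹ ^ (k+1) := by
  split
  · exact le_rfl
  · positivity

lemma hasSum_halves (k : ℕ) : HasSum (fun j : ℕ => (2:ℝ)⁻¹ ^ (j + k + 1)) ((2:ℝ)⁻¹ ^ k) := by
  have h : HasSum (fun j : ℕ => (2:ℝ)⁻¹ ^ j) 2 := by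
    have h0 := hasSum_geometric_of_lt_one (r := (2:ℝ)⁻¹) (by norm_num) (by norm_num)
    have : ((1:ℝ) - 2⁻¹)⁻¹ = 2 := by norm_num
    rwa [this] at h0
  have h2 := h.mul_right ((2:ℝ)⁻¹ ^ (k + 1))
  have h3 : (2:ℝ) * (2:ℝ)⁻¹ ^ (k+1) = (2:ℝ)⁻¹ ^ k := by
    rw [pow_succ]; ring
  rw [h3] at h2
  have h4 : (fun j : ℕ => (2:ℝ)⁻¹ ^ (j + k + 1)) = fun j : ℕ => (2:ℝ)⁻¹ ^ j * (2:ℝ)⁻¹ ^ (k+1) := by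
    funext j; rw [← pow_add, Nat.add_assoc]
  rw [h4]
  exact h2

lemma summable_halves : Summable (fun j : ℕ => (2:ℝ)⁻¹ ^ (j + 1)) := by
  have := (hasSum_halves 0).summable
  simpa using this

lemma summable_yv (a : ℕ → Bool) : Summable (fun k => if a k then (2:ℝ)⁻¹ ^ (k+1) else 0) :=
  Summable.of_nonneg_of_le (yv_term_nonneg a) (yv_term_le a) summable_halves

lemma phi_nonneg (a : ℕ → Bool) : 0 ≤ phiC a := tsum_nonneg (phi_term_nonneg a)

lemma phi_le (a : ℕ → Bool) : phiC a ≤ l 0 := by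
  unfold phiC
  have h := hasSum_g_tail 0
  simp only [add_zero] at h
  rw [← h.tsum_eq]
  exact Summable.tsum_le_tsum (phi_term_le a) (summable_phi a) h.summable

lemma yv_nonneg (a : ℕ → Bool) : 0 ≤ yv a := tsum_nonneg (yv_term_nonneg a)

lemma yv_le_one (a : ℕ → Bool) : yv a ≤ 1 := by
  unfold yv
  have h := hasSum_halves 0
  simp only [add_zero, pow_zero] at h
  rw [← h.tsum_eq]
  exact Summable.tsum_le_tsum (yv_term_le a) (summable_yv a) h.summable

/-- tail of phi -/
lemma phi_split (a : ℕ → Bool) (k : ℕ) :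
    phiC a = (∑ j ∈ Finset.range k, if a j then g j else 0)
      + ∑' j, if a (j + k) then g (j + k) else 0 := by
  unfold phiC
  exact (Summable.sum_add_tsum_nat_add k (summable_phi a)).symm

lemma phi_tail_nonneg (a : ℕ → Bool) (k : ℕ) :
    0 ≤ ∑' j, if a (j + k) then g (j + k) else 0 :=
  tsum_nonneg (fun j => phi_term_nonneg a _)

lemma phi_tail_le (a : ℕ → Bool) (k : ℕ) :
    (∑' j, if a (j + k) then g (j + k) else 0) ≤ l k := by
  rw [← (hasSum_g_tail k).tsum_eq]
  exact Summable.tsum_le_tsum (fun j => phi_term_le a _) ((summable_phi a).comp_injective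
    (add_left_injective k)) (hasSum_g_tail k).summable

lemma yv_split (a : ℕ → Bool) (k : ℕ) :
    yv a = (∑ j ∈ Finset.range k, if a j then (2:ℝ)⁻¹ ^ (j+1) else 0)
      + ∑' j, if a (j + k) then (2:ℝ)⁻¹ ^ (j + k + 1) else 0 := by
  unfold yv
  exact (Summable.sum_add_tsum_nat_add k (summable_yv a)).symm

lemma yv_tail_nonneg (a : ℕ → Bool) (k : ℕ) :
    0 ≤ ∑' j, if a (j + k) then (2:ℝ)⁻¹ ^ (j + k + 1) else 0 :=
  tsum_nonneg (fun j => by split <;> positivity)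

lemma yv_tail_le (a : ℕ → Bool) (k : ℕ) :
    (∑' j, if a (j + k) then (2:ℝ)⁻¹ ^ (j + k + 1) else 0) ≤ (2:ℝ)⁻¹ ^ k := by
  have hnn : ∀ j : ℕ, 0 ≤ if a (j + k) then (2:ℝ)⁻¹ ^ (j + k + 1) else 0 := by
    intro j; split
    · positivity
    · exact le_rfl
  have hle : ∀ j : ℕ, (if a (j + k) then (2:ℝ)⁻¹ ^ (j + k + 1) else 0) ≤ (2:ℝ)⁻¹ ^ (j + k + 1) := by
    intro j; split
    · exact le_rfl
    · positivity
  rw [← (hasSum_halves k).tsum_eq]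
  exact Summable.tsum_le_tsum hle (Summable.of_nonneg_of_le hnn hle (hasSum_halves k).summable)
    (hasSum_halves k).summable


/-- If `a` and `b` agree below `k`, `a k = false`, `b k = true`, then `phiC a < phiC b`. -/
lemma phi_lex {a b : ℕ → Bool} {k : ℕ} (hagree : ∀ j < k, a j = b j)
    (ha : a k = false) (hb : b k = true) : phiC a < phiC b := by
  have hpre : (∑ j ∈ Finset.range (k+1), if a j then g j else 0)
      = ∑ j ∈ Finset.range k, if b j then g j else 0 := by
    rw [Finset.sum_range_succ, ha]
    simp only [if_false, Bool.false_eq_true, add_zero]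
    exact Finset.sum_congr rfl (fun j hj => by rw [hagree j (Finset.mem_range.mp hj)])
  have h1 : phiC a ≤ (∑ j ∈ Finset.range k, if b j then g j else 0) + l (k+1) := by
    rw [phi_split a (k+1), hpre]
    exact add_le_add_right (phi_tail_le a (k+1)) _
  have h2 : (∑ j ∈ Finset.range k, if b j then g j else 0) + g k ≤ phiC b := by
    rw [phi_split b (k+1), Finset.sum_range_succ, hb]
    simp only [if_true]
    exact le_add_of_nonneg_right (phi_tail_nonneg b (k+1))
  have h3 : l (k+1) < g k := by
    have := two_l_succ_lt k
    unfold g; linarith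
  linarith

/-- If `a` and `b` agree below `k`, `a k = false`, `b k = true`, then `yv a ≤ yv b`. -/
lemma yv_lex {a b : ℕ → Bool} {k : ℕ} (hagree : ∀ j < k, a j = b j)
    (ha : a k = false) (hb : b k = true) : yv a ≤ yv b := by
  have hpre : (∑ j ∈ Finset.range (k+1), if a j then (2:ℝ)⁻¹ ^ (j+1) else 0)
      = ∑ j ∈ Finset.range k, if b j then (2:ℝ)⁻¹ ^ (j+1) else 0 := by
    rw [Finset.sum_range_succ, ha]
    simp only [if_false, Bool.false_eq_true, add_zero]
    exact Finset.sum_congr rfl (fun j hj => by rw [hagree j (Finset.mem_range.mp hj)])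
  have h1 : yv a ≤ (∑ j ∈ Finset.range k, if b j then (2:ℝ)⁻¹ ^ (j+1) else 0)
      + (2:ℝ)⁻¹ ^ (k+1) := by
    rw [yv_split a (k+1), hpre]
    exact add_le_add_right (yv_tail_le a (k+1)) _
  have h2 : (∑ j ∈ Finset.range k, if b j then (2:ℝ)⁻¹ ^ (j+1) else 0) + (2:ℝ)⁻¹ ^ (k+1)
      ≤ yv b := by
    rw [yv_split b (k+1), Finset.sum_range_succ, hb]
    simp only [if_true]
    exact le_add_of_nonneg_right (yv_tail_nonneg b (k+1))
  linarith

/-- Order transfer: `phiC b ≤ phiC a → yv b ≤ yv a`. -/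
lemma yv_mono_of_phi_le {a b : ℕ → Bool} (h : phiC b ≤ phiC a) : yv b ≤ yv a := by
  by_cases hab : a = b
  · rw [hab]
  · have hex : ∃ k, a k ≠ b k := by
      by_contra hc
      push_neg at hc
      exact hab (funext hc)
    set k := Nat.find hex with hk
    have hne : a k ≠ b k := Nat.find_spec hex
    have hagree : ∀ j < k, a j = b j := fun j hj => by
      have := Nat.find_min hex hj
      simpa using this
    cases hbk : b k
    · cases hak : a k
      · exact absurd (hak.trans hbk.symm) hne
      · exact yv_lex (fun j hj => (hagree j hj).symm) hbk hak
    · cases hak : a k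
      · have := phi_lex hagree hak hbk
        linarith
      · exact absurd (hak.trans hbk.symm) hne

/-- The Cantor-type function. -/
noncomputable def Psi (t : ℝ) : ℝ := sSup (yv '' {a : ℕ → Bool | phiC a ≤ t})

lemma bddAbove_yv_image (t : ℝ) : BddAbove (yv '' {a : ℕ → Bool | phiC a ≤ t}) := by
  refine ⟨1, ?_⟩
  rintro v ⟨b, _, rfl⟩
  exact yv_le_one b

lemma Psi_nonneg (t : ℝ) : 0 ≤ Psi t :=
  Real.sSup_nonneg (by rintro v ⟨b, _, rfl⟩; exact yv_nonneg b)

lemma Psi_le_one (t : ℝ) : Psi t ≤ 1 :=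
  Real.sSup_le (by rintro v ⟨b, _, rfl⟩; exact yv_le_one b) one_pos.le

lemma phi_false : phiC (fun _ => false) = 0 := by
  unfold phiC
  simp

lemma yv_false : yv (fun _ => false) = 0 := by
  unfold yv
  simp

lemma phi_true : phiC (fun _ => true) = l 0 := by
  unfold phiC
  have h := hasSum_g_tail 0
  simp only [add_zero] at h
  simpa using h.tsum_eq

lemma yv_true : yv (fun _ => true) = 1 := by
  unfold yv
  have h := hasSum_halves 0
  simp only [add_zero, pow_zero] at h
  simpa using h.tsum_eq

lemma Psi_monotone : Monotone Psi := by
  intro s t hst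
  by_cases hs : ({a : ℕ → Bool | phiC a ≤ s}).Nonempty
  · apply csSup_le_csSup (bddAbove_yv_image t) (hs.image _)
    exact Set.image_mono (fun a ha => le_trans ha hst)
  · have : {a : ℕ → Bool | phiC a ≤ s} = ∅ := Set.not_nonempty_iff_eq_empty.mp hs
    unfold Psi
    rw [this]
    simp only [Set.image_empty]
    rw [Real.sSup_empty]
    exact Psi_nonneg t

lemma Psi_of_nonneg {t : ℝ} (ht : 0 ≤ t) : yv (fun _ => false) ≤ Psi t := by
  apply le_csSup (bddAbove_yv_image t)
  exact ⟨_, by simpa [phi_false] using ht, rfl⟩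

lemma Psi_zero : Psi 0 = 0 := by
  apply le_antisymm
  · apply Real.sSup_le _ le_rfl
    rintro v ⟨b, hb, rfl⟩
    -- phiC b ≤ 0 forces all digits false
    have hb0 : ∀ k, b k = false := by
      intro k
      by_contra hk
      have hbk : b k = true := by
        cases h : b k
        · exact absurd h hk
        · rfl
      have : g k ≤ phiC b := by
        have hsplit := phi_split b (k+1)
        have h1 : g k ≤ ∑ j ∈ Finset.range (k+1), if b j then g j else 0 := by
          rw [Finset.sum_range_succ, hbk]
          simp only [if_true]
          exact le_add_of_nonneg_left (Finset.sum_nonneg (fun j _ => phi_term_nonneg b j))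
        have h2 := phi_tail_nonneg b (k+1)
        linarith
      have := g_pos k
      have hphi := hb
      simp only [Set.mem_setOf_eq] at hphi
      linarith
    have : b = fun _ => false := funext hb0
    rw [this, yv_false]
  · simpa [yv_false] using Psi_of_nonneg (le_refl (0:ℝ))

lemma Psi_ge_one {t : ℝ} (ht : l 0 ≤ t) : Psi t = 1 := by
  apply le_antisymm (Psi_le_one t)
  have : yv (fun _ => true) ≤ Psi t := by
    apply le_csSup (bddAbove_yv_image t)
    exact ⟨_, by simpa [phi_true] using ht, rfl⟩
  rwa [yv_true] at this

lemma Psi_one : Psi 1 = 1 := by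
  apply Psi_ge_one
  exact le_trans (l_le_one 0) le_rfl

lemma Psi_phi (a : ℕ → Bool) : Psi (phiC a) = yv a := by
  apply le_antisymm
  · apply Real.sSup_le _ (yv_nonneg a)
    rintro v ⟨b, hb, rfl⟩
    exact yv_mono_of_phi_le hb
  · exact le_csSup (bddAbove_yv_image _) ⟨a, by simp [Set.mem_setOf_eq], rfl⟩


open Classical in
/-- greedy binary partial sums of `v` -/
noncomputable def bS (v : ℝ) : ℕ → ℝ
  | 0 => 0
  | k + 1 => bS v k + (if bS v k + (2:ℝ)⁻¹ ^ (k+1) ≤ v then (2:ℝ)⁻¹ ^ (k+1) else 0)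

open Classical in
/-- greedy binary digits of `v` -/
noncomputable def bDig (v : ℝ) (k : ℕ) : Bool := decide (bS v k + (2:ℝ)⁻¹ ^ (k+1) ≤ v)

lemma bS_invariant {v : ℝ} (h0 : 0 ≤ v) (h1 : v ≤ 1) (k : ℕ) :
    bS v k ≤ v ∧ v ≤ bS v k + (2:ℝ)⁻¹ ^ k := by
  induction k with
  | zero => simpa [bS] using ⟨h0, h1⟩
  | succ k ih =>
    classical
    obtain ⟨ihl, ihr⟩ := ih
    have hp : (2:ℝ)⁻¹ ^ k = 2 * (2:ℝ)⁻¹ ^ (k+1) := by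
      rw [pow_succ]; ring
    by_cases hc : bS v k + (2:ℝ)⁻¹ ^ (k+1) ≤ v
    · constructor
      · simp only [bS, if_pos hc]
        exact hc
      · simp only [bS, if_pos hc]
        linarith
    · push_neg at hc
      constructor
      · simp only [bS, if_neg (not_le.mpr hc)]
        linarith
      · simp only [bS, if_neg (not_le.mpr hc)]
        linarith

lemma bS_eq_partial (v : ℝ) (k : ℕ) :
    bS v k = ∑ j ∈ Finset.range k, (if bDig v j then (2:ℝ)⁻¹ ^ (j+1) else 0) := by
  induction k with
  | zero => simp [bS]
  | succ k ih =>
    classical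
    rw [Finset.sum_range_succ, ← ih]
    simp only [bS, bDig]
    by_cases hc : bS v k + (2:ℝ)⁻¹ ^ (k+1) ≤ v
    · simp [hc]
    · simp [hc]

lemma yv_bDig {v : ℝ} (h0 : 0 ≤ v) (h1 : v ≤ 1) : yv (bDig v) = v := by
  have hsum : HasSum (fun k => if bDig v k then (2:ℝ)⁻¹ ^ (k+1) else 0)
      (yv (bDig v)) := (summable_yv (bDig v)).hasSum
  have htend := hsum.tendsto_sum_nat
  simp only [← bS_eq_partial v] at htend
  have htend2 : Tendsto (fun k => bS v k) atTop (nhds v) := by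
    have hL : Tendsto (fun k : ℕ => v - (2:ℝ)⁻¹ ^ k) atTop (nhds v) := by
      have := (tendsto_pow_atTop_nhds_zero_of_lt_one
        (by norm_num : (0:ℝ) ≤ 2⁻¹) (by norm_num : (2:ℝ)⁻¹ < 1)).const_sub v
      simpa using this
    have hU : Tendsto (fun _ : ℕ => v) atTop (nhds v) := tendsto_const_nhds
    refine tendsto_of_tendsto_of_tendsto_of_le_of_le hL hU ?_ ?_
    · intro k
      have := (bS_invariant h0 h1 k).2
      linarith
    · intro k
      exact (bS_invariant h0 h1 k).1
  exact tendsto_nhds_unique htend htend2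

lemma Psi_surjOn : Set.SurjOn Psi (Set.Icc 0 1) (Set.Icc 0 1) := by
  rintro v ⟨h0, h1⟩
  refine ⟨phiC (bDig v), ⟨phi_nonneg _, le_trans (phi_le _) (l_le_one 0)⟩, ?_⟩
  rw [Psi_phi, yv_bDig h0 h1]

lemma Psi_of_neg {t : ℝ} (ht : t < 0) : Psi t = t + (0 - t) := by
  have : {a : ℕ → Bool | phiC a ≤ t} = ∅ := by
    apply Set.eq_empty_iff_forall_notMem.mpr
    intro a ha
    simp only [Set.mem_setOf_eq] at ha
    have := phi_nonneg a
    linarith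
  unfold Psi
  rw [this]
  simp [Real.sSup_empty]

/-- the globally-modified function, surjective on all of ℝ -/
noncomputable def Phi (t : ℝ) : ℝ := Psi t + min t 0 + max (t - 1) 0

lemma Phi_monotone : Monotone Phi := by
  apply Monotone.add
  · apply Monotone.add Psi_monotone
    exact fun x y h => min_le_min h le_rfl
  · exact fun x y h => max_le_max (by linarith) le_rfl

lemma Phi_surjective : Function.Surjective Phi := by
  intro v
  rcases lt_or_ge v 0 with hv | hv
  · refine ⟨v, ?_⟩
    unfold Phi
    have h1 : Psi v = 0 := by
      have := Psi_of_neg hv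
      simpa using this
    rw [h1, min_eq_left hv.le, max_eq_right (by linarith)]
    simp
  · rcases le_or_gt v 1 with hv1 | hv1
    · obtain ⟨t, ht, hPsit⟩ := Psi_surjOn ⟨hv, hv1⟩
      refine ⟨t, ?_⟩
      unfold Phi
      rw [hPsit, min_eq_right ht.1, max_eq_right (by linarith [ht.2])]
      simp
    · refine ⟨v, ?_⟩
      unfold Phi
      have h1 : Psi v = 1 := Psi_ge_one (le_trans (l_le_one 0) (by linarith))
      rw [h1, min_eq_right (by linarith), max_eq_left (by linarith)]
      ring

lemma Phi_continuous : Continuous Phi :=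
  Phi_monotone.continuous_of_surjective Phi_surjective

lemma Psi_continuousOn : ContinuousOn Psi (Set.Icc 0 1) := by
  apply (Phi_continuous.continuousOn).congr
  intro t ⟨h0, h1⟩
  unfold Phi
  rw [min_eq_right h0, max_eq_right (by linarith)]
  simp


lemma phi_continuous : Continuous phiC := by
  unfold phiC
  apply continuous_tsum (u := g) _ summable_g
  · intro k a
    rw [Real.norm_eq_abs, abs_of_nonneg (phi_term_nonneg a k)]
    exact phi_term_le a k
  · intro k
    have h1 : Continuous (fun a : ℕ → Bool => a k) := continuous_apply k
    have h2 : Continuous (fun b : Bool => if b then g k else 0) :=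
      continuous_of_discreteTopology
    exact h2.comp h1

/-- The Cantor-type set. -/
noncomputable def K : Set ℝ := Set.range phiC

lemma K_isClosed : IsClosed K := (isCompact_range phi_continuous).isClosed

lemma Psi_locally_const {t : ℝ} (ht : t ∉ K) : ∀ᶠ u in nhds t, Psi u = Psi t := by
  have hopen : IsOpen Kᶜ := K_isClosed.isOpen_compl
  obtain ⟨ε, hε, hball⟩ := Metric.isOpen_iff.mp hopen t ht
  have key : ∀ u : ℝ, dist u t < ε → Psi u = Psi t := by
    intro u hu
    have hset : {a : ℕ → Bool | phiC a ≤ u} = {a : ℕ → Bool | phiC a ≤ t} := by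
      ext a
      simp only [Set.mem_setOf_eq]
      constructor
      · intro hau
        by_contra hat
        push_neg at hat
        have hd : dist (phiC a) t < ε := by
          rw [Real.dist_eq, abs_of_pos (by linarith)]
          have : dist u t < ε := hu
          rw [Real.dist_eq] at this
          have habs := abs_lt.mp this
          linarith [habs.1, habs.2]
        exact hball hd ⟨a, rfl⟩
      · intro hat
        by_contra hau
        push_neg at hau
        have hd : dist (phiC a) t < ε := by
          rw [Real.dist_eq]
          have : dist u t < ε := hu
          rw [Real.dist_eq] at this
          have habs := abs_lt.mp this
          rw [abs_of_nonpos (by linarith)]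
          linarith [habs.1, habs.2]
        exact hball hd ⟨a, rfl⟩
    unfold Psi
    rw [hset]
  filter_upwards [Metric.ball_mem_nhds t hε] with u hu
  exact key u hu

lemma Psi_hasDerivAt {t : ℝ} (ht : t ∉ K) : HasDerivAt Psi 0 t := by
  have h := Psi_locally_const ht
  have hconst : HasDerivAt (fun _ : ℝ => Psi t) 0 t := hasDerivAt_const t (Psi t)
  exact hconst.congr_of_eventuallyEq (by filter_upwards [h] with u hu using hu)


lemma VnR_nonneg (E : Set ℝ) (m : ℕ) : 0 ≤ VnR E m := by
  apply Real.sSup_nonneg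
  rintro v ⟨z, hz, rfl⟩
  exact Finset.prod_nonneg (fun p _ => abs_nonneg _)

lemma phi_dist {a b : ℕ → Bool} {k : ℕ} (h : ∀ j < k, a j = b j) :
    |phiC a - phiC b| ≤ l k := by
  have hsa := phi_split a k
  have hsb := phi_split b k
  have hpre : (∑ j ∈ Finset.range k, if a j then g j else 0)
      = ∑ j ∈ Finset.range k, if b j then g j else 0 :=
    Finset.sum_congr rfl (fun j hj => by rw [h j (Finset.mem_range.mp hj)])
  have hta0 := phi_tail_nonneg a k
  have htal := phi_tail_le a k
  have htb0 := phi_tail_nonneg b k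
  have htbl := phi_tail_le b k
  rw [abs_le]
  constructor <;> [skip; skip] <;> rw [hsa, hsb, hpre] <;> linarith

/-- The exceptional set. -/
noncomputable def NN : Set ℝ := K ∩ Set.Ioo 0 1

lemma VnR_NN_le (k : ℕ) : VnR NN (2 ^ k + 1) ≤ l k := by
  apply Real.sSup_le _ (l_pos k).le
  rintro v ⟨z, hz, rfl⟩
  -- choose binary codes
  have hzK : ∀ i, ∃ a : ℕ → Bool, phiC a = z i := fun i => (hz i).1
  choose A hA using hzK
  -- pigeonhole on the first k digits
  have hcard : Fintype.card (Fin k → Bool) < Fintype.card (Fin (2 ^ k + 1)) := by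
    simp [Fintype.card_fun]
  obtain ⟨i, i', hne, heq⟩ :=
    Fintype.exists_ne_map_eq_of_card_lt (fun i (j : Fin k) => A i (j : ℕ)) hcard
  have key : ∀ i i' : Fin (2 ^ k + 1), i < i' → (∀ j < k, A i j = A i' j) →
      (∏ p ∈ Finset.univ.filter
          (fun p : Fin (2^k+1) × Fin (2^k+1) => p.1 < p.2), |z p.1 - z p.2|) ≤ l k := by
    intro i i' hlt hagree
    have hp0 : (i, i') ∈ Finset.univ.filter
        (fun p : Fin (2^k+1) × Fin (2^k+1) => p.1 < p.2) :=
      Finset.mem_filter.mpr ⟨Finset.mem_univ _, hlt⟩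
    rw [← Finset.mul_prod_erase _ _ hp0]
    have hfac : |z i - z i'| ≤ l k := by
      rw [← hA i, ← hA i']
      exact phi_dist hagree
    have hone : ∀ p : Fin (2^k+1) × Fin (2^k+1), |z p.1 - z p.2| ≤ 1 := by
      intro p
      have h1 := (hz p.1).2
      have h2 := (hz p.2).2
      rw [abs_le]
      obtain ⟨h1a, h1b⟩ := h1
      obtain ⟨h2a, h2b⟩ := h2
      constructor <;> linarith
    calc |z i - z i'| * ∏ p ∈ (Finset.univ.filter
          (fun p : Fin (2^k+1) × Fin (2^k+1) => p.1 < p.2)).erase (i, i'), |z p.1 - z p.2|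
        ≤ l k * 1 := by
          apply mul_le_mul hfac ?_ (Finset.prod_nonneg (fun p _ => abs_nonneg _)) (l_pos k).le
          exact Finset.prod_le_one (fun p _ => abs_nonneg _) (fun p _ => hone p)
      _ = l k := mul_one _
  rcases hne.lt_or_gt with hlt | hlt
  · exact key i i' hlt (fun j hj => congrFun heq ⟨j, hj⟩)
  · exact key i' i hlt (fun j hj => (congrFun heq ⟨j, hj⟩).symm)

lemma capf_nonneg (n : ℕ) :
    0 ≤ VnR NN (n + 2) ^ ((2 : ℝ) / (((n : ℝ) + 2) * ((n : ℝ) + 1))) :=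
  Real.rpow_nonneg (VnR_nonneg _ _) _

lemma capf_le (k : ℕ) :
    VnR NN ((2 ^ k - 1) + 2) ^
      ((2 : ℝ) / ((((2 ^ k - 1 : ℕ) : ℝ) + 2) * (((2 ^ k - 1 : ℕ) : ℝ) + 1)))
      ≤ (2:ℝ)⁻¹ ^ (k + 1) := by
  have h1 : (1:ℕ) ≤ 2 ^ k := Nat.one_le_two_pow
  have hnat : (2 ^ k - 1) + 2 = 2 ^ k + 1 := by omega
  have hc : ((2 ^ k - 1 : ℕ) : ℝ) = (2:ℝ) ^ k - 1 := by
    push_cast [Nat.cast_sub h1]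
    ring
  set e : ℝ := (2 : ℝ) / ((((2 ^ k - 1 : ℕ) : ℝ) + 2) * (((2 ^ k - 1 : ℕ) : ℝ) + 1)) with he
  have hD : (0:ℝ) < (((2 ^ k - 1 : ℕ) : ℝ) + 2) * (((2 ^ k - 1 : ℕ) : ℝ) + 1) := by
    have : (0:ℝ) ≤ ((2 ^ k - 1 : ℕ) : ℝ) := Nat.cast_nonneg _
    nlinarith
  have he0 : 0 ≤ e := by
    rw [he]
    positivity
  have step1 : VnR NN ((2 ^ k - 1) + 2) ^ e ≤ l k ^ e := by
    apply Real.rpow_le_rpow (VnR_nonneg _ _) _ he0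
    rw [hnat]
    exact VnR_NN_le k
  have step2 : l k ^ e = (2:ℝ)⁻¹ ^ (((8:ℝ) ^ k) * e) := by
    unfold l
    rw [← Real.rpow_natCast ((2:ℝ)⁻¹) (8 ^ k), ← Real.rpow_mul (by norm_num)]
    push_cast
    ring_nf
  have harith : ((k:ℝ) + 1) ≤ ((8:ℝ) ^ k) * e := by
    rw [he, hc]
    have hk2 : (k:ℝ) + 1 ≤ (2:ℝ) ^ k := by
      have := Nat.lt_two_pow_self (n := k)
      exact_mod_cast Nat.succ_le_of_lt this
    have h2k : (1:ℝ) ≤ (2:ℝ) ^ k := one_le_pow₀ (by norm_num)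
    have h8 : (8:ℝ) ^ k = (2:ℝ) ^ k * (2:ℝ) ^ k * (2:ℝ) ^ k := by
      rw [show (8:ℝ) = 2 * 2 * 2 by norm_num, mul_pow, mul_pow]
    have hD' : (0:ℝ) < ((2:ℝ) ^ k - 1 + 2) * ((2:ℝ) ^ k - 1 + 1) := by nlinarith
    rw [mul_div_assoc'] -- 8^k * (2 / D) = 8^k * 2 / D
    rw [le_div_iff₀ hD']
    nlinarith [h2k, hk2, h8]
  have step3 : (2:ℝ)⁻¹ ^ (((8:ℝ) ^ k) * e) ≤ (2:ℝ)⁻¹ ^ (((k:ℝ) + 1)) := by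
    exact Real.rpow_le_rpow_of_exponent_ge (by norm_num) (by norm_num) harith
  have step4 : (2:ℝ)⁻¹ ^ (((k:ℝ) + 1)) = (2:ℝ)⁻¹ ^ (k + 1) := by
    rw [show ((k:ℝ) + 1) = ((k + 1 : ℕ) : ℝ) by push_cast; ring, Real.rpow_natCast]
  calc VnR NN ((2 ^ k - 1) + 2) ^ e ≤ l k ^ e := step1
    _ = (2:ℝ)⁻¹ ^ (((8:ℝ) ^ k) * e) := step2
    _ ≤ (2:ℝ)⁻¹ ^ (((k:ℝ) + 1)) := step3
    _ = (2:ℝ)⁻¹ ^ (k + 1) := step4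

lemma capR_NN : capR NN = 0 := by
  have hbdd : BddBelow (Set.range fun n : ℕ =>
      VnR NN (n + 2) ^ ((2 : ℝ) / (((n : ℝ) + 2) * ((n : ℝ) + 1)))) := by
    refine ⟨0, ?_⟩
    rintro x ⟨m, rfl⟩
    exact capf_nonneg m
  apply le_antisymm
  · by_contra hpos
    push_neg at hpos
    obtain ⟨n, hn⟩ := exists_pow_lt_of_lt_one hpos (show (2:ℝ)⁻¹ < 1 by norm_num)
    have h1 : capR NN ≤ VnR NN ((2 ^ n - 1) + 2) ^
        ((2 : ℝ) / ((((2 ^ n - 1 : ℕ) : ℝ) + 2) * (((2 ^ n - 1 : ℕ) : ℝ) + 1))) :=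
      ciInf_le hbdd (2 ^ n - 1)
    have h2 := capf_le n
    have h3 : (2:ℝ)⁻¹ ^ (n + 1) ≤ (2:ℝ)⁻¹ ^ n :=
      pow_le_pow_of_le_one (by norm_num) (by norm_num) (by omega)
    linarith
  · exact le_ciInf capf_nonneg

end CantorCap

/-- There is a continuous nondecreasing function `Ψ : [0,1] → [0,1]` with
`Ψ(0) = 0`, `Ψ(1) = 1`, whose derivative vanishes at every point of `(0,1)`
outside a set of logarithmic capacity zero. -/
theorem exists_cantor_singular_cap :
    ∃ Ψ : ℝ → ℝ, ContinuousOn Ψ (Set.Icc 0 1) ∧ MonotoneOn Ψ (Set.Icc 0 1) ∧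
      Set.MapsTo Ψ (Set.Icc 0 1) (Set.Icc 0 1) ∧ Ψ 0 = 0 ∧ Ψ 1 = 1 ∧
      ∃ N : Set ℝ, N ⊆ Set.Ioo 0 1 ∧ capR N = 0 ∧
        ∀ t ∈ Set.Ioo (0 : ℝ) 1, t ∉ N → HasDerivAt Ψ 0 t := by
  refine ⟨CantorCap.Psi, CantorCap.Psi_continuousOn, CantorCap.Psi_monotone.monotoneOn _,
    fun t _ => ⟨CantorCap.Psi_nonneg t, CantorCap.Psi_le_one t⟩,
    CantorCap.Psi_zero, CantorCap.Psi_one,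
    CantorCap.NN, Set.inter_subset_right, CantorCap.capR_NN, ?_⟩
  intro t ht htN
  apply CantorCap.Psi_hasDerivAt
  intro htK
  exact htN ⟨htK, ht⟩
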